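/- Let C be an (n,k) convolutional code with column distances d_j^c. If d_j^c(C) = (j+1)(n−k) + 1 for some j, then d_i^c(C) = (i+1)(n−k) + 1 for all i ≤ j. -/

import Mathlib

/-- The truncated sliding parity-check matrix: the (j+1)(n-k) × (j+1)n lower
block triangular Toeplitz matrix whose block (r,s) equals H_{r-s} for r ≥ s and
0 otherwise, built from the coefficients H_0, H_1, ... of H(z). -/
def slidingParity {F : Type*} [Field F] (n k : ℕ) (hk : k < n)
    (H : ℕ → Matrix (Fin (n - k)) (Fin n) F) (j : ℕ) :
    Matrix (Fin ((j + 1) * (n - k))) (Fin ((j + 1) * n)) F :=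
  Matrix.of fun a b =>
    if (b : ℕ) / n ≤ (a : ℕ) / (n - k) then
      H ((a : ℕ) / (n - k) - (b : ℕ) / n)
        ⟨(a : ℕ) % (n - k), Nat.mod_lt _ (by omega)⟩
        ⟨(b : ℕ) % n, Nat.mod_lt _ (by omega)⟩
    else 0

/-- Hamming weight of a vector. -/
noncomputable def hammingWt {F : Type*} {ι : Type*} [Zero F] (v : ι → F) : ℕ :=
  Nat.card {i // v i ≠ 0}

/-- The j-th column distance: the minimal Hamming weight of a truncated codeword
(v_0,...,v_j) ∈ F^{(j+1)n} lying in the kernel of the sliding parity-check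
matrix and with v_0 ≠ 0 (i.e. nonzero in the first block of n coordinates). -/
noncomputable def colDist {F : Type*} [Field F] (n k : ℕ) (hk : k < n)
    (H : ℕ → Matrix (Fin (n - k)) (Fin n) F) (j : ℕ) : ℕ :=
  sInf {w | ∃ v : Fin ((j + 1) * n) → F,
    Matrix.mulVec (slidingParity n k hk H j) v = 0 ∧
    (∃ t : Fin ((j + 1) * n), (t : ℕ) < n ∧ v t ≠ 0) ∧
    hammingWt v = w}

open Finset Matrix

namespace Stmt11Aux

variable {F : Type*} [Field F]

/-- Pack a sequence of blocks of size `n` into a flat vector of length `N*n`. -/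
def packV {F : Type*} [Zero F] (n N : ℕ) (u : ℕ → Fin n → F) : Fin (N * n) → F :=
  fun a => u ((a : ℕ) / n) ⟨(a : ℕ) % n, Nat.mod_lt _ (by
    rcases Nat.eq_zero_or_pos n with h | h
    · exact absurd a.isLt (by simp [h])
    · exact h)⟩

def unpackV {F : Type*} [Zero F] (n N : ℕ) (v : Fin (N * n) → F) : ℕ → Fin n → F :=
  fun r t => if h : n * r + (t : ℕ) < N * n then v ⟨n * r + (t : ℕ), h⟩ else 0

def blockEquiv (n N : ℕ) (hn : 0 < n) : Fin (N * n) ≃ Fin N × Fin n where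
  toFun a := (⟨(a : ℕ) / n, by
      rw [Nat.div_lt_iff_lt_mul hn]; exact a.isLt⟩,
    ⟨(a : ℕ) % n, Nat.mod_lt _ hn⟩)
  invFun p := ⟨n * (p.1 : ℕ) + (p.2 : ℕ), by
      have h2 := p.2.isLt
      have h1 := p.1.isLt
      calc n * (p.1 : ℕ) + (p.2 : ℕ) < n * ((p.1 : ℕ) + 1) := by rw [Nat.mul_succ]; omega
        _ ≤ n * N := Nat.mul_le_mul_left n h1
        _ = N * n := Nat.mul_comm n N⟩
  left_inv a := by
    apply Fin.ext
    exact Nat.div_add_mod _ n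
  right_inv p := by
    have h2 := p.2.isLt
    apply Prod.ext
    · apply Fin.ext
      simp [Nat.mul_add_div hn, Nat.div_eq_of_lt h2]
    · apply Fin.ext
      simp [Nat.mul_add_mod, Nat.mod_eq_of_lt h2]

lemma packV_eq_zero {n N : ℕ} (hn : 0 < n) (w : ℕ → Fin n → F) :
    packV n N w = 0 ↔ ∀ r < N, w r = 0 := by
  constructor
  · intro h r hr
    funext t
    have hb : n * r + (t : ℕ) < N * n := by
      have := t.isLt
      calc n * r + (t : ℕ) < n * (r + 1) := by rw [Nat.mul_succ]; omega
        _ ≤ n * N := Nat.mul_le_mul_left n hr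
        _ = N * n := Nat.mul_comm n N
    have := congrFun h ⟨n * r + (t : ℕ), hb⟩
    simpa [packV, Nat.mul_add_div hn, Nat.div_eq_of_lt t.isLt,
      Nat.mul_add_mod, Nat.mod_eq_of_lt t.isLt] using this
  · intro h
    funext a
    have hr : (a : ℕ) / n < N := by rw [Nat.div_lt_iff_lt_mul hn]; exact a.isLt
    have := congrFun (h _ hr) ⟨(a : ℕ) % n, Nat.mod_lt _ hn⟩
    simpa [packV] using this

lemma packV_congr {n N : ℕ} (hn : 0 < n) {u u' : ℕ → Fin n → F}
    (h : ∀ r < N, u r = u' r) : packV n N u = packV n N u' := by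
  funext a
  have hr : (a : ℕ) / n < N := by rw [Nat.div_lt_iff_lt_mul hn]; exact a.isLt
  simp only [packV]
  rw [h _ hr]

lemma packV_unpackV {n N : ℕ} (hn : 0 < n) (v : Fin (N * n) → F) :
    packV n N (unpackV n N v) = v := by
  funext a
  have hda : n * ((a : ℕ) / n) + (a : ℕ) % n = (a : ℕ) := Nat.div_add_mod _ n
  simp only [packV, unpackV]
  rw [dif_pos (by rw [hda]; exact a.isLt)]
  exact congrArg v (Fin.ext hda)

lemma hammingWt_packV {n : ℕ} (N : ℕ) (hn : 0 < n) (u : ℕ → Fin n → F) :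
    hammingWt (packV n N u) = ∑ r ∈ range N, hammingWt (u r) := by
  classical
  have e1 : {a : Fin (N * n) // packV n N u a ≠ 0} ≃
      {p : Fin N × Fin n // u (p.1 : ℕ) p.2 ≠ 0} :=
    (blockEquiv n N hn).subtypeEquiv (fun a => Iff.rfl)
  have e2 : {p : Fin N × Fin n // u (p.1 : ℕ) p.2 ≠ 0} ≃
      Σ r : Fin N, {t : Fin n // u (r : ℕ) t ≠ 0} :=
    Equiv.subtypeProdEquivSigmaSubtype (fun (a : Fin N) (b : Fin n) => u (a : ℕ) b ≠ 0)
  rw [hammingWt, Nat.card_congr (e1.trans e2), Nat.card_eq_fintype_card,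
    Fintype.card_sigma]
  rw [← Fin.sum_univ_eq_sum_range (fun r => hammingWt (u r)) N]
  exact Finset.sum_congr rfl fun r _ => by
    rw [hammingWt, Nat.card_eq_fintype_card]


lemma mulVec_packV {n k : ℕ} (hk : k < n)
    (H : ℕ → Matrix (Fin (n - k)) (Fin n) F) (j : ℕ) (u : ℕ → Fin n → F) :
    Matrix.mulVec (slidingParity n k hk H j) (packV n (j + 1) u) =
      packV (n - k) (j + 1)
        (fun r => ∑ s ∈ range (r + 1), Matrix.mulVec (H (r - s)) (u s)) := by
  classical
  have hm : 0 < n - k := by omega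
  have hn : 0 < n := by omega
  funext a
  set r : ℕ := (a : ℕ) / (n - k) with hrdef
  have hrj : r ≤ j := by
    have : r < j + 1 := by rw [hrdef, Nat.div_lt_iff_lt_mul hm]; exact a.isLt
    omega
  have key : ∀ (s : Fin (j + 1)) (t : Fin n),
      slidingParity n k hk H j a ((blockEquiv n (j+1) hn).symm (s, t)) *
        packV n (j + 1) u ((blockEquiv n (j+1) hn).symm (s, t)) =
      if (s : ℕ) ≤ r then H (r - (s : ℕ)) ⟨(a : ℕ) % (n - k), Nat.mod_lt _ hm⟩ t * u (s : ℕ) t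
      else 0 := by
    intro s t
    have hval : (((blockEquiv n (j+1) hn).symm (s, t) : Fin ((j+1)*n)) : ℕ) = n * (s : ℕ) + (t : ℕ) := rfl
    have hdiv : (n * (s : ℕ) + (t : ℕ)) / n = (s : ℕ) := by
      rw [Nat.mul_add_div hn, Nat.div_eq_of_lt t.isLt]
      omega
    have hmod : (n * (s : ℕ) + (t : ℕ)) % n = (t : ℕ) := by
      rw [Nat.mul_add_mod, Nat.mod_eq_of_lt t.isLt]
    simp only [slidingParity, Matrix.of_apply, packV, hval, hdiv, hmod, Fin.eta, ite_mul,
      zero_mul, Nat.add_zero]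
    rfl
  calc Matrix.mulVec (slidingParity n k hk H j) (packV n (j + 1) u) a
      = ∑ b : Fin ((j+1)*n), slidingParity n k hk H j a b * packV n (j + 1) u b := rfl
    _ = ∑ p : Fin (j+1) × Fin n,
          slidingParity n k hk H j a ((blockEquiv n (j+1) hn).symm p) *
            packV n (j + 1) u ((blockEquiv n (j+1) hn).symm p) :=
        (Equiv.sum_comp (blockEquiv n (j+1) hn).symm _).symm
    _ = ∑ s : Fin (j+1), ∑ t : Fin n,
          (if (s : ℕ) ≤ r then H (r - (s : ℕ)) ⟨(a : ℕ) % (n - k), Nat.mod_lt _ hm⟩ t * u (s : ℕ) t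
           else 0) := by
        rw [Fintype.sum_prod_type]
        exact Finset.sum_congr rfl fun s _ => Finset.sum_congr rfl fun t _ => key s t
    _ = ∑ s : Fin (j+1),
          (if (s : ℕ) ≤ r then
            ∑ t : Fin n, H (r - (s : ℕ)) ⟨(a : ℕ) % (n - k), Nat.mod_lt _ hm⟩ t * u (s : ℕ) t
          else 0) := by
        refine Finset.sum_congr rfl fun s _ => ?_
        split <;> simp
    _ = ∑ s ∈ range (j+1),
          (if s ≤ r then
            ∑ t : Fin n, H (r - s) ⟨(a : ℕ) % (n - k), Nat.mod_lt _ hm⟩ t * u s t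
          else 0) :=
        Fin.sum_univ_eq_sum_range
          (fun s => if s ≤ r then
            ∑ t : Fin n, H (r - s) ⟨(a : ℕ) % (n - k), Nat.mod_lt _ hm⟩ t * u s t
          else 0) (j+1)
    _ = ∑ s ∈ (range (j+1)).filter (· ≤ r),
          ∑ t : Fin n, H (r - s) ⟨(a : ℕ) % (n - k), Nat.mod_lt _ hm⟩ t * u s t :=
        (Finset.sum_filter _ _).symm
    _ = ∑ s ∈ range (r+1),
          ∑ t : Fin n, H (r - s) ⟨(a : ℕ) % (n - k), Nat.mod_lt _ hm⟩ t * u s t := by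
        congr 1
        ext x
        simp only [Finset.mem_filter, Finset.mem_range]
        omega
    _ = packV (n - k) (j + 1)
        (fun r => ∑ s ∈ range (r + 1), Matrix.mulVec (H (r - s)) (u s)) a := by
        simp only [packV, Finset.sum_apply]
        rfl


noncomputable def extB {m' n : ℕ} (H : ℕ → Matrix (Fin m') (Fin n) F)
    (sel : (Fin m' → F) → Fin n → F) (i : ℕ) (w : ℕ → Fin n → F) : ℕ → Fin n → F
  | r =>
    if r ≤ i then w r
    else sel (-(∑ s ∈ (range r).attach,
      Matrix.mulVec (H (r - (s : ℕ))) (extB H sel i w (s : ℕ))))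
  termination_by r => r
  decreasing_by exact Finset.mem_range.mp s.2

lemma extB_le {m' n : ℕ} (H : ℕ → Matrix (Fin m') (Fin n) F)
    (sel : (Fin m' → F) → Fin n → F) (i : ℕ) (w : ℕ → Fin n → F) {r : ℕ} (h : r ≤ i) :
    extB H sel i w r = w r := by
  rw [extB, if_pos h]

lemma extB_gt {m' n : ℕ} (H : ℕ → Matrix (Fin m') (Fin n) F)
    (sel : (Fin m' → F) → Fin n → F) (i : ℕ) (w : ℕ → Fin n → F) {r : ℕ} (h : i < r) :
    extB H sel i w r =
      sel (-(∑ s ∈ range r, Matrix.mulVec (H (r - s)) (extB H sel i w s))) := by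
  rw [extB, if_neg (by omega)]
  exact congrArg sel (congrArg Neg.neg
    (Finset.sum_attach (range r) (fun s => Matrix.mulVec (H (r - s)) (extB H sel i w s))))

lemma exists_good_sel {n k : ℕ} (hk : k < n) (H0 : Matrix (Fin (n - k)) (Fin n) F)
    (hrank : H0.rank = n - k) :
    ∃ (g : Fin (n - k) → Fin n) (sel : (Fin (n - k) → F) → Fin n → F),
      Function.Injective g ∧ (∀ b, Matrix.mulVec H0 (sel b) = b) ∧
      (∀ b t, sel b t ≠ 0 → ∃ s, g s = t) := by
  classical
  have htop : Submodule.span F (Set.range H0ᵀ) = ⊤ := by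
    apply Submodule.eq_top_of_finrank_eq
    rw [show Set.range H0ᵀ = Set.range H0.col from rfl, ← Matrix.rank_eq_finrank_span_cols, hrank, Module.finrank_fin_fun]
  obtain ⟨b, hbsub, hbspan, hbli⟩ := exists_linearIndependent F (Set.range H0ᵀ)
  have hfin : b.Finite := hbli.setFinite
  haveI := hfin.fintype
  let B0 : Module.Basis b F (Fin (n - k) → F) :=
    Module.Basis.mk hbli (by rw [Subtype.range_coe, hbspan, htop])
  have hcard : Fintype.card b = n - k := by
    have h1 := Module.finrank_eq_card_basis B0
    rw [Module.finrank_fin_fun] at h1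
    exact h1.symm
  let e : b ≃ Fin (n - k) := Fintype.equivFinOfCardEq hcard
  have hpre : ∀ s : Fin (n - k), ∃ t : Fin n, H0ᵀ t = ((e.symm s : b) : Fin (n - k) → F) :=
    fun s => hbsub (e.symm s).2
  choose g hg using hpre
  have hginj : Function.Injective g := by
    intro s1 s2 h
    apply e.symm.injective
    apply Subtype.ext
    rw [← hg s1, ← hg s2, h]
  let B : Module.Basis (Fin (n - k)) F (Fin (n - k) → F) := B0.reindex e
  have hB : ∀ s, (B s : Fin (n - k) → F) = H0ᵀ (g s) := by
    intro s
    rw [Module.Basis.reindex_apply, Module.Basis.mk_apply]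
    exact (hg s).symm
  refine ⟨g, fun bv t => ∑ s, if g s = t then B.repr bv s else 0, hginj, ?_, ?_⟩
  · intro bv
    funext ρ
    calc Matrix.mulVec H0 (fun t => ∑ s, if g s = t then B.repr bv s else 0) ρ
        = ∑ t, H0 ρ t * ∑ s, if g s = t then B.repr bv s else 0 := rfl
      _ = ∑ t, ∑ s, if g s = t then H0 ρ t * B.repr bv s else 0 := by
          refine Finset.sum_congr rfl fun t _ => ?_
          rw [Finset.mul_sum]
          exact Finset.sum_congr rfl fun s _ => by split <;> simp
      _ = ∑ s, ∑ t, if g s = t then H0 ρ t * B.repr bv s else 0 := Finset.sum_comm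
      _ = ∑ s, H0 ρ (g s) * B.repr bv s := by
          refine Finset.sum_congr rfl fun s _ => ?_
          rw [Finset.sum_ite_eq]
          simp
      _ = ∑ s, B.repr bv s • B s ρ := by
          refine Finset.sum_congr rfl fun s _ => ?_
          rw [hB s]
          simp [Matrix.transpose_apply, mul_comm, smul_eq_mul]
      _ = (∑ s, B.repr bv s • B s) ρ := by
          rw [Finset.sum_apply]
          exact Finset.sum_congr rfl fun s _ => (Pi.smul_apply _ _ _).symm
      _ = bv ρ := by rw [B.sum_repr bv]
  · intro bv t h
    by_contra hns
    push_neg at hns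
    exact h (Finset.sum_eq_zero fun s _ => if_neg (hns s))

end Stmt11Aux

/-- For an (n,k) convolutional code (parity-check matrix with
H_0 of full row rank n-k), if the j-th column distance attains the maximal value
(j+1)(n-k)+1, then d_i^c = (i+1)(n-k)+1 for every i ≤ j. -/
theorem stmt11 {F : Type*} [Field F] (n k : ℕ) (hk0 : 0 < k) (hk : k < n)
    (H : ℕ → Matrix (Fin (n - k)) (Fin n) F)
    (hrank : (H 0).rank = n - k) (j : ℕ)
    (hj : colDist n k hk H j = (j + 1) * (n - k) + 1) :
    ∀ i ≤ j, colDist n k hk H i = (i + 1) * (n - k) + 1 := by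
  classical
  intro i hij
  have hm : 0 < n - k := by omega
  have hn : 0 < n := by omega
  obtain ⟨g, sel, hginj, hsel1, hsel2⟩ := Stmt11Aux.exists_good_sel hk (H 0) hrank
  -- weight bound for sel
  have hselwt : ∀ b, hammingWt (sel b) ≤ n - k := by
    intro b
    have hex : ∀ t : {t : Fin n // sel b t ≠ 0}, ∃ s, g s = t.1 := fun t => hsel2 b t.1 t.2
    choose f hf using hex
    have hfinj : Function.Injective f := fun t1 t2 h =>
      Subtype.ext (by rw [← hf t1, ← hf t2, h])
    have := Nat.card_le_card_of_injective f hfinj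
    simpa [hammingWt, Nat.card_eq_fintype_card] using this
  -- parity propagation for the extension
  have hext_par : ∀ (i' : ℕ) (w : ℕ → Fin n → F),
      (∀ r ≤ i', ∑ s ∈ Finset.range (r+1),
        Matrix.mulVec (H (r - s)) (Stmt11Aux.extB H sel i' w s) = 0) →
      ∀ r, ∑ s ∈ Finset.range (r+1),
        Matrix.mulVec (H (r - s)) (Stmt11Aux.extB H sel i' w s) = 0 := by
    intro i' w hbase r
    by_cases h : r ≤ i'
    · exact hbase r h
    · push_neg at h
      rw [Finset.sum_range_succ, Stmt11Aux.extB_gt H sel i' w h, Nat.sub_self, hsel1]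
      exact add_neg_cancel _
  have hext_wt : ∀ (i' : ℕ) (w : ℕ → Fin n → F) (r : ℕ), i' < r →
      hammingWt (Stmt11Aux.extB H sel i' w r) ≤ n - k := by
    intro i' w r h
    rw [Stmt11Aux.extB_gt H sel i' w h]
    exact hselwt _
  -- LOWER BOUND
  have hlow : ∀ v : Fin ((i+1)*n) → F,
      Matrix.mulVec (slidingParity n k hk H i) v = 0 →
      (∃ t : Fin ((i+1)*n), (t : ℕ) < n ∧ v t ≠ 0) →
      (i+1)*(n-k)+1 ≤ hammingWt v := by
    rintro v hv1 ⟨t, ht, htv⟩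
    set u : ℕ → Fin n → F := Stmt11Aux.unpackV n (i+1) v with hu
    have hpack : Stmt11Aux.packV n (i+1) u = v := Stmt11Aux.packV_unpackV hn v
    have hpar0 : ∀ r < i+1, ∑ s ∈ Finset.range (r+1), Matrix.mulVec (H (r-s)) (u s) = 0 := by
      rw [← hpack, Stmt11Aux.mulVec_packV hk H i u] at hv1
      exact (Stmt11Aux.packV_eq_zero hm _).mp hv1
    set u' := Stmt11Aux.extB H sel i u with hu'
    have hagree : ∀ r ≤ i, u' r = u r := fun r hr => Stmt11Aux.extB_le H sel i u hr
    have hfull : ∀ r, ∑ s ∈ Finset.range (r+1), Matrix.mulVec (H (r-s)) (u' s) = 0 := by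
      apply hext_par
      intro r hr
      have hcg : ∀ s ∈ Finset.range (r+1),
          Matrix.mulVec (H (r-s)) (u' s) = Matrix.mulVec (H (r-s)) (u s) := by
        intro s hs
        rw [hagree s (by simp only [Finset.mem_range] at hs; omega)]
      rw [Finset.sum_congr rfl hcg]
      exact hpar0 r (by omega)
    set v' := Stmt11Aux.packV n (j+1) u' with hv'
    have hv'par : Matrix.mulVec (slidingParity n k hk H j) v' = 0 := by
      rw [hv', Stmt11Aux.mulVec_packV hk H j u']
      rw [Stmt11Aux.packV_eq_zero hm]
      intro r _
      exact hfull r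
    have htle : (t : ℕ) < (j+1)*n :=
      lt_of_lt_of_le t.isLt (Nat.mul_le_mul_right n (by omega))
    have hnz : v' ⟨(t:ℕ), htle⟩ ≠ 0 := by
      have e1 : v' ⟨(t:ℕ), htle⟩ = u' ((t:ℕ)/n) ⟨(t:ℕ)%n, Nat.mod_lt _ hn⟩ := rfl
      have e2 : v t = u ((t:ℕ)/n) ⟨(t:ℕ)%n, Nat.mod_lt _ hn⟩ := by rw [← hpack]; rfl
      rw [e1, hagree _ (by rw [Nat.div_eq_of_lt ht]; omega), ← e2]
      exact htv
    have hwt : hammingWt v' ≤ hammingWt v + (j - i) * (n - k) := by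
      rw [hv', Stmt11Aux.hammingWt_packV (j+1) hn]
      rw [← hpack, Stmt11Aux.hammingWt_packV (i+1) hn]
      have hsp := Finset.sum_Ico_consecutive (fun r => hammingWt (u' r))
        (Nat.zero_le (i+1)) (show i+1 ≤ j+1 by omega)
      rw [Finset.range_eq_Ico, ← hsp]
      have h1 : ∑ r ∈ Finset.Ico 0 (i+1), hammingWt (u' r)
          = ∑ r ∈ Finset.Ico 0 (i+1), hammingWt (u r) := by
        refine Finset.sum_congr rfl fun r hr => ?_
        rw [hagree r (by simp only [Finset.mem_Ico] at hr; omega)]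
      have h2 : ∑ r ∈ Finset.Ico (i+1) (j+1), hammingWt (u' r) ≤ (j - i) * (n - k) := by
        have hb := Finset.sum_le_card_nsmul (Finset.Ico (i+1) (j+1))
          (fun r => hammingWt (u' r)) (n-k)
          (fun r hr => hext_wt i u r (by simp only [Finset.mem_Ico] at hr; omega))
        rw [Nat.card_Ico, smul_eq_mul, Nat.succ_sub_succ] at hb
        exact hb
      rw [h1]
      exact Nat.add_le_add (le_of_eq (by rw [Finset.range_eq_Ico])) (by simpa using h2)
    have hdj : colDist n k hk H j ≤ hammingWt v' :=
      Nat.sInf_le ⟨v', hv'par, ⟨⟨(t:ℕ), htle⟩, ht, hnz⟩, rfl⟩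
    rw [hj] at hdj
    have h3 : (j+1)*(n-k)+1 ≤ hammingWt v + (j-i)*(n-k) := le_trans hdj hwt
    have hkey : (j+1)*(n-k) = (i+1)*(n-k) + (j-i)*(n-k) := by
      rw [← Nat.add_mul]
      congr 1
      omega
    rw [hkey] at h3
    linarith
  -- UPPER BOUND : explicit low-weight truncated codeword
  have ht0ex : ∃ t0 : Fin n, ∀ s, g s ≠ t0 := by
    by_contra hc
    push_neg at hc
    have hsurj : Function.Surjective g := fun t => hc t
    have hcard := Fintype.card_le_of_surjective g hsurj
    simp only [Fintype.card_fin] at hcard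
    omega
  obtain ⟨t0, ht0⟩ := ht0ex
  set eb : Fin n → F := fun t => if t = t0 then 1 else 0 with heb
  set w0 : ℕ → Fin n → F :=
    fun r => if r = 0 then eb + sel (-(Matrix.mulVec (H 0) eb)) else 0 with hw0
  set u0 := Stmt11Aux.extB H sel 0 w0 with hu0
  have hu00 : u0 0 = eb + sel (-(Matrix.mulVec (H 0) eb)) := by
    rw [hu0, Stmt11Aux.extB_le H sel 0 w0 (le_refl 0), hw0]
    simp
  have hfull0 : ∀ r, ∑ s ∈ Finset.range (r+1), Matrix.mulVec (H (r-s)) (u0 s) = 0 := by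
    apply hext_par
    intro r hr
    have hr0 : r = 0 := by omega
    subst hr0
    rw [Finset.sum_range_one, Nat.sub_self]
    rw [show Stmt11Aux.extB H sel 0 w0 0 = u0 0 from rfl, hu00]
    rw [Matrix.mulVec_add, hsel1]
    exact add_neg_cancel _
  set v0 := Stmt11Aux.packV n (i+1) u0 with hv0
  have hv0par : Matrix.mulVec (slidingParity n k hk H i) v0 = 0 := by
    rw [hv0, Stmt11Aux.mulVec_packV hk H i u0, Stmt11Aux.packV_eq_zero hm]
    intro r _
    exact hfull0 r
  have ht0' : (t0 : ℕ) < (i+1)*n :=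
    lt_of_lt_of_le t0.isLt (Nat.le_mul_of_pos_left n (by omega))
  have hselt0 : ∀ b, sel b t0 = 0 := by
    intro b
    by_contra hh
    obtain ⟨s, hs⟩ := hsel2 b t0 hh
    exact ht0 s hs
  have hnz0 : v0 ⟨(t0:ℕ), ht0'⟩ ≠ 0 := by
    have e1 : v0 ⟨(t0:ℕ), ht0'⟩ = u0 ((t0:ℕ)/n) ⟨(t0:ℕ)%n, Nat.mod_lt _ hn⟩ := rfl
    have hdv : (t0:ℕ)/n = 0 := Nat.div_eq_of_lt t0.isLt
    have hmd : (⟨(t0:ℕ)%n, Nat.mod_lt _ hn⟩ : Fin n) = t0 := Fin.ext (Nat.mod_eq_of_lt t0.isLt)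
    rw [e1, hdv, hmd, hu00]
    show eb t0 + sel (-(Matrix.mulVec (H 0) eb)) t0 ≠ 0
    rw [hselt0, heb]
    simp
  have hwt00 : hammingWt (u0 0) ≤ (n - k) + 1 := by
    rw [hu00]
    set b' := -(Matrix.mulVec (H 0) eb) with hb'
    have hexf : ∀ t : {t : Fin n // (eb + sel b') t ≠ 0},
        (¬ ∃ s, g s = t.1) → t.1 = t0 := by
      intro t h
      have hsz : sel b' t.1 = 0 := by
        by_contra hh
        exact h (hsel2 b' t.1 hh)
      by_contra hne
      apply t.2
      show eb t.1 + sel b' t.1 = 0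
      rw [hsz]
      simp only [heb, add_zero]
      simp [hne]
    let f' : {t : Fin n // (eb + sel b') t ≠ 0} → Option (Fin (n-k)) :=
      fun t => if h : ∃ s, g s = t.1 then some (Classical.choose h) else none
    have hfinj : Function.Injective f' := by
      intro t1 t2 h
      simp only [f'] at h
      rcases Classical.em (∃ s, g s = t1.1) with h1 | h1 <;>
        rcases Classical.em (∃ s, g s = t2.1) with h2 | h2
      · rw [dif_pos h1, dif_pos h2] at h
        apply Subtype.ext
        rw [← Classical.choose_spec h1, ← Classical.choose_spec h2]
        exact congrArg g (Option.some_injective _ h)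
      · rw [dif_pos h1, dif_neg h2] at h
        exact absurd h (by simp)
      · rw [dif_neg h1, dif_pos h2] at h
        exact absurd h (by simp)
      · apply Subtype.ext
        rw [hexf t1 h1, hexf t2 h2]
    have := Nat.card_le_card_of_injective f' hfinj
    simpa [hammingWt, Nat.card_eq_fintype_card] using this
  have hup : hammingWt v0 ≤ (i+1)*(n-k)+1 := by
    rw [hv0, Stmt11Aux.hammingWt_packV (i+1) hn]
    rw [Finset.sum_range_succ']
    have hA : ∑ r ∈ Finset.range i, hammingWt (u0 (r+1)) ≤ i * (n-k) := by
      have hb := Finset.sum_le_card_nsmul (Finset.range i)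
        (fun r => hammingWt (u0 (r+1))) (n-k)
        (fun r _ => hext_wt 0 w0 (r+1) (by omega))
      rw [Finset.card_range, smul_eq_mul] at hb
      exact hb
    calc ∑ r ∈ Finset.range i, hammingWt (u0 (r+1)) + hammingWt (u0 0)
        ≤ i * (n-k) + ((n-k)+1) := add_le_add hA hwt00
      _ = (i+1)*(n-k)+1 := by ring
  have heq : hammingWt v0 = (i+1)*(n-k)+1 :=
    le_antisymm hup (hlow v0 hv0par ⟨⟨(t0:ℕ), ht0'⟩, t0.isLt, hnz0⟩)
  have hmem : (i+1)*(n-k)+1 ∈ {w | ∃ v : Fin ((i + 1) * n) → F,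
      Matrix.mulVec (slidingParity n k hk H i) v = 0 ∧
      (∃ t : Fin ((i + 1) * n), (t : ℕ) < n ∧ v t ≠ 0) ∧
      hammingWt v = w} := ⟨v0, hv0par, ⟨⟨(t0:ℕ), ht0'⟩, t0.isLt, hnz0⟩, heq⟩
  apply le_antisymm
  · exact Nat.sInf_le hmem
  · have hmm := Nat.sInf_mem (⟨_, hmem⟩ : Set.Nonempty _)
    obtain ⟨v, hv1, hv2, hv3⟩ := hmm
    calc (i+1)*(n-k)+1 ≤ hammingWt v := hlow v hv1 hv2
      _ = colDist n k hk H i := hv3
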